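/- arXiv:2312.11995 — 2 statements merged into one kernel-verified Lean document; each statement's English description precedes it below -/
import Mathlib

section
/- Let q be a prime power and let x, y, z be three pairwise distinct (q+1)-th roots of unity in F_{q^2}. If the determinant of the matrix with rows (x^{-h}, y^{-h}, z^{-h}), (x^h, y^h, z^h), (x^{h+1}, y^{h+1}, z^{h+1}) is zero, then either x^{2h+1} = y^{2h+1} = z^{2h+1} or x^{2h} = y^{2h} = z^{2h}. -/
theorem stmt_2 (q : ℕ) (hq : ∃ p n : ℕ, p.Prime ∧ 0 < n ∧ q = p ^ n)
    (F : Type*) [Field F] [Fintype F] (hF : Fintype.card F = q ^ 2)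
    (h : ℕ) (x y z : F)
    (hx : x ^ (q + 1) = 1) (hy : y ^ (q + 1) = 1) (hz : z ^ (q + 1) = 1)
    (hxy : x ≠ y) (hxz : x ≠ z) (hyz : y ≠ z)
    (hdet : Matrix.det !![x⁻¹ ^ h, y⁻¹ ^ h, z⁻¹ ^ h;
                          x ^ h, y ^ h, z ^ h;
                          x ^ (h + 1), y ^ (h + 1), z ^ (h + 1)] = 0) :
    (x ^ (2 * h + 1) = y ^ (2 * h + 1) ∧ y ^ (2 * h + 1) = z ^ (2 * h + 1)) ∨
      (x ^ (2 * h) = y ^ (2 * h) ∧ y ^ (2 * h) = z ^ (2 * h)) := by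
  obtain ⟨p, n, hp, hn, rfl⟩ := hq
  haveI : Fact p.Prime := ⟨hp⟩
  -- char F = p
  have hchar : CharP F p := by
    obtain ⟨m, hck⟩ := FiniteField.card F (ringChar F)
    have hdvd : p ∣ Fintype.card F := by
      rw [hF, ← pow_mul]
      exact dvd_pow_self p (by positivity)
    rw [hck.2] at hdvd
    have hpr : p = ringChar F :=
      (Nat.prime_dvd_prime_iff_eq hp hck.1).mp (hp.dvd_of_dvd_pow hdvd)
    exact hpr ▸ ringChar.charP F
  haveI := hchar
  have hx0 : x ≠ 0 := fun hx0 => by simp [hx0] at hx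
  have hy0 : y ≠ 0 := fun hy0 => by simp [hy0] at hy
  have hz0 : z ≠ 0 := fun hz0 => by simp [hz0] at hz
  have xq : x ^ p ^ n = x⁻¹ := by
    field_simp; rw [← pow_succ]; exact hx
  have yq : y ^ p ^ n = y⁻¹ := by
    field_simp; rw [← pow_succ]; exact hy
  have zq : z ^ p ^ n = z⁻¹ := by
    field_simp; rw [← pow_succ]; exact hz
  set A := (x ^ h) ^ 2 with hA
  set B := (y ^ h) ^ 2 with hB
  set C := (z ^ h) ^ 2 with hC
  rw [Matrix.det_fin_three] at hdet
  simp only [inv_pow] at hdet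
  have ha : x ^ h ≠ 0 := pow_ne_zero _ hx0
  have hb : y ^ h ≠ 0 := pow_ne_zero _ hy0
  have hc : z ^ h ≠ 0 := pow_ne_zero _ hz0
  have E2 : B * C * (z - y) + A * C * (x - z) + A * B * (y - x) = 0 := by
    simp only [Matrix.of_apply, Matrix.cons_val', Matrix.cons_val_zero, Matrix.cons_val_one, Matrix.cons_val_two, Matrix.empty_val', Matrix.cons_val_fin_one, Matrix.tail_cons, Matrix.vecHead, Matrix.vecTail, Function.comp_apply, Fin.succ_zero_eq_one, Fin.succ_one_eq_two] at hdet
    field_simp at hdet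
    have E2b : y ^ h * (z ^ h * (B * C * (z - y) + A * C * (x - z) + A * B * (y - x))) = 0 := by
      rw [hA, hB, hC]
      linear_combination (y ^ h * z ^ h) * hdet
    exact ((mul_eq_zero.mp ((mul_eq_zero.mp E2b).resolve_left hb)).resolve_left hc)
  have E1 : A * x * (y - z) + B * y * (z - x) + C * z * (x - y) = 0 := by
    have E1' := congrArg (iterateFrobenius F p n) E2
    rw [hA, hB, hC] at E1'
    simp only [map_add, map_mul, map_sub, map_pow, map_zero, iterateFrobenius_def,
      xq, yq, zq, inv_pow] at E1'
    field_simp at E1'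
    rw [mul_zero] at E1'
    have E1n := E1'
    have hK : (x ^ h) ^ 2 * (y ^ h) ^ 2 * (z ^ h) ^ 2 * (x * y * z) ≠ 0 := by
      simp [ha, hb, hc, hx0, hy0, hz0]
    have E1b : ((x ^ h) ^ 2 * (y ^ h) ^ 2 * (z ^ h) ^ 2 * (x * y * z)) *
        (A * x * (y - z) + B * y * (z - x) + C * z * (x - y)) = 0 := by
      rw [hA, hB, hC]
      linear_combination ((x ^ h) ^ 2 * (y ^ h) ^ 2 * (z ^ h) ^ 2 * (x * y * z)) * E1n
    exact (mul_eq_zero.mp E1b).resolve_left hK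
  have hA0 : A ≠ 0 := pow_ne_zero _ ha
  have hB0 : B ≠ 0 := pow_ne_zero _ hb
  have hC0 : C ≠ 0 := pow_ne_zero _ hc
  have hal : z - y ≠ 0 := sub_ne_zero.mpr (Ne.symm hyz)
  have hbe : x - z ≠ 0 := sub_ne_zero.mpr hxz
  have hga : y - x ≠ 0 := sub_ne_zero.mpr (Ne.symm hxy)
  have k1 : (A - B) * (x * A - y * B) = 0 := by
    have k1' : (z - y) * ((x - z) * ((A - B) * (x * A - y * B))) = 0 := by
      linear_combination (-((z - y) * B + (x - z) * A)) * E1 - ((y - x) * z) * E2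
    exact ((mul_eq_zero.mp ((mul_eq_zero.mp k1').resolve_left hal)).resolve_left hbe)
  have k2 : (B - C) * (y * B - z * C) = 0 := by
    have k2' : (x - z) * ((y - x) * ((B - C) * (y * B - z * C))) = 0 := by
      linear_combination (-((x - z) * C + (y - x) * B)) * E1 - ((z - y) * x) * E2
    exact ((mul_eq_zero.mp ((mul_eq_zero.mp k2').resolve_left hbe)).resolve_left hga)
  have k3 : (C - A) * (z * C - x * A) = 0 := by
    have k3' : (y - x) * ((z - y) * ((C - A) * (z * C - x * A))) = 0 := by
      linear_combination (-((y - x) * A + (z - y) * C)) * E1 - ((x - z) * y) * E2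
    exact ((mul_eq_zero.mp ((mul_eq_zero.mp k3').resolve_left hga)).resolve_left hal)
  have hAx : x ^ (2 * h) = A := by rw [hA, ← pow_mul, mul_comm]
  have hBy : y ^ (2 * h) = B := by rw [hB, ← pow_mul, mul_comm]
  have hCz : z ^ (2 * h) = C := by rw [hC, ← pow_mul, mul_comm]
  have hAx1 : x ^ (2 * h + 1) = A * x := by rw [pow_succ, hAx]
  have hBy1 : y ^ (2 * h + 1) = B * y := by rw [pow_succ, hBy]
  have hCz1 : z ^ (2 * h + 1) = C * z := by rw [pow_succ, hCz]
  rcases mul_eq_zero.mp k1 with h1 | h1 <;> rcases mul_eq_zero.mp k2 with h2 | h2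
  · right
    rw [sub_eq_zero] at h1 h2
    exact ⟨by rw [hAx, hBy, h1], by rw [hBy, hCz, h2]⟩
  · rcases mul_eq_zero.mp k3 with h3 | h3
    · right
      rw [sub_eq_zero] at h1 h3
      exact ⟨by rw [hAx, hBy, h1], by rw [hBy, hCz, ← h1, h3]⟩
    · exfalso
      rw [sub_eq_zero] at h1 h2 h3
      -- x*A = z*C = y*B = y*A, so x = y
      apply hxy
      have : x * A = y * A := by linear_combination -h3 - h2 - y * h1
      exact mul_right_cancel₀ hA0 this
  · rcases mul_eq_zero.mp k3 with h3 | h3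
    · right
      rw [sub_eq_zero] at h2 h3
      exact ⟨by rw [hAx, hBy, ← h3, h2], by rw [hBy, hCz, h2]⟩
    · exfalso
      rw [sub_eq_zero] at h1 h2 h3
      -- x*A = z*C, y*B = x*A, B = C ⇒ y*B = z*B ⇒ y = z
      apply hyz
      have : y * B = z * B := by linear_combination -h1 - h3 - z * h2
      exact mul_right_cancel₀ hB0 this
  · left
    rw [sub_eq_zero] at h1 h2
    constructor
    · rw [hAx1, hBy1, mul_comm A x, mul_comm B y, h1]
    · rw [hBy1, hCz1, mul_comm B y, mul_comm C z, h2]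
end

section
/- Let q be a prime power and let x, y, z be three pairwise distinct (q+1)-th roots of unity in F_{q^2}. If the determinant of the matrix with rows (x^{-(h+1)}, y^{-(h+1)}, z^{-(h+1)}), (x^h, y^h, z^h), (x^{h+1}, y^{h+1}, z^{h+1}) is zero, then either x^{2h+1} = y^{2h+1} = z^{2h+1} or x^{2h+2} = y^{2h+2} = z^{2h+2}. -/
theorem stmt_3 (q : ℕ) (hq : ∃ p n : ℕ, p.Prime ∧ 0 < n ∧ q = p ^ n)
    (F : Type*) [Field F] [Fintype F] (hF : Fintype.card F = q ^ 2)
    (h : ℕ) (x y z : F)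
    (hx : x ^ (q + 1) = 1) (hy : y ^ (q + 1) = 1) (hz : z ^ (q + 1) = 1)
    (hxy : x ≠ y) (hxz : x ≠ z) (hyz : y ≠ z)
    (hdet : Matrix.det !![x⁻¹ ^ (h + 1), y⁻¹ ^ (h + 1), z⁻¹ ^ (h + 1);
                          x ^ h, y ^ h, z ^ h;
                          x ^ (h + 1), y ^ (h + 1), z ^ (h + 1)] = 0) :
    (x ^ (2 * h + 1) = y ^ (2 * h + 1) ∧ y ^ (2 * h + 1) = z ^ (2 * h + 1)) ∨
      (x ^ (2 * h + 2) = y ^ (2 * h + 2) ∧ y ^ (2 * h + 2) = z ^ (2 * h + 2)) := by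
  obtain ⟨p, n, hp, hn, rfl⟩ := hq
  haveI : Fact p.Prime := ⟨hp⟩
  -- characteristic of F is p
  obtain ⟨m, hrp, hcard⟩ := FiniteField.card F (ringChar F)
  have hpr : p = ringChar F := by
    have hdvd : p ∣ ringChar F ^ (m : ℕ) := by
      rw [← hcard, hF]
      exact dvd_pow (dvd_pow_self p hn.ne') (by positivity)
    exact ((Nat.prime_dvd_prime_iff_eq hp hrp).mp (hp.dvd_of_dvd_pow hdvd))
  haveI hcharp : CharP F p := hpr ▸ ringChar.charP F
  have hfrob : ∀ s t : F, (s + t) ^ p ^ n = s ^ p ^ n + t ^ p ^ n := fun s t =>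
    add_pow_char_pow ..
  -- rows are linearly dependent
  obtain ⟨v, hv, hv0⟩ := Matrix.exists_vecMul_eq_zero_iff.mpr hdet
  have e0 := congrFun hv0 0
  have e1 := congrFun hv0 1
  have e2 := congrFun hv0 2
  simp [Matrix.vecMul, dotProduct, Fin.sum_univ_three] at e0 e1 e2
  -- the key consequences for each root of unity
  have key : ∀ u : F, u ^ (p ^ n + 1) = 1 →
      v 0 * u⁻¹ ^ (h + 1) + v 1 * u ^ h + v 2 * u ^ (h + 1) = 0 →
      (v 0 + v 1 * u ^ (2 * h + 1) + v 2 * u ^ (2 * h + 2) = 0 ∧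
        v 0 ^ p ^ n * u ^ (2 * h + 2) + v 1 ^ p ^ n * u + v 2 ^ p ^ n = 0) := by
    intro u hu he
    have hu0 : u ≠ 0 := by
      intro h0
      rw [h0, zero_pow (Nat.succ_ne_zero _)] at hu
      exact zero_ne_one hu
    have huq : u ^ p ^ n * u = 1 := by
      rw [← pow_succ]; exact hu
    have hE : v 0 + v 1 * u ^ (2 * h + 1) + v 2 * u ^ (2 * h + 2) = 0 := by
      have := congrArg (· * u ^ (h + 1)) he
      simp only [zero_mul] at this
      field_simp at this
      have hk0 : u⁻¹ ^ (h + 1) * u ^ (h + 1) = 1 := by rw [← mul_pow, inv_mul_cancel₀ hu0, one_pow]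
      linear_combination this - v 0 * hk0
    refine ⟨hE, ?_⟩
    have h2 := congrArg (· ^ p ^ n) hE
    simp only [zero_pow (pow_ne_zero n hp.ne_zero)] at h2
    rw [hfrob, hfrob, mul_pow, mul_pow, pow_right_comm u (2*h+1), pow_right_comm u (2*h+2)] at h2
    -- h2 : v0^q + v1^q * (u^q)^(2h+1) + v2^q * (u^q)^(2h+2) = 0
    have hq' : u ^ p ^ n = u⁻¹ := by
      field_simp
      linear_combination huq
    rw [hq'] at h2
    have hk1 : u⁻¹ ^ (2 * h + 1) * u ^ (2 * h + 1) = 1 := by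
      rw [← mul_pow, inv_mul_cancel₀ hu0, one_pow]
    have hk2 : u⁻¹ ^ (2 * h + 2) * u ^ (2 * h + 2) = 1 := by
      rw [← mul_pow, inv_mul_cancel₀ hu0, one_pow]
    linear_combination (u ^ (2 * h + 2)) * h2 - (v 1 ^ p ^ n * u) * hk1 -
      (v 2 ^ p ^ n) * hk2
  obtain ⟨Ex, Sx⟩ := key x hx (by linear_combination e0)
  obtain ⟨Ey, Sy⟩ := key y hy (by linear_combination e1)
  obtain ⟨Ez, Sz⟩ := key z hz (by linear_combination e2)
  have hx0 : x ≠ 0 := fun h0 => by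
    rw [h0, zero_pow (Nat.succ_ne_zero _)] at hx; exact zero_ne_one hx
  have hy0 : y ≠ 0 := fun h0 => by
    rw [h0, zero_pow (Nat.succ_ne_zero _)] at hy; exact zero_ne_one hy
  have hz0 : z ≠ 0 := fun h0 => by
    rw [h0, zero_pow (Nat.succ_ne_zero _)] at hz; exact zero_ne_one hz
  by_cases hc : v 2 = 0
  · -- c = 0 : then b ≠ 0 and x^(2h+1) all equal
    have hb : v 1 ≠ 0 := by
      intro hb
      have ha : v 0 = 0 := by rw [hc, hb] at Ex; linear_combination Ex
      apply hv
      funext i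
      fin_cases i <;> simp [ha, hb, hc]
    left
    constructor
    · have : v 1 * x ^ (2 * h + 1) = v 1 * y ^ (2 * h + 1) := by
        rw [hc] at Ex Ey; linear_combination Ex - Ey
      exact mul_left_cancel₀ hb this
    · have : v 1 * y ^ (2 * h + 1) = v 1 * z ^ (2 * h + 1) := by
        rw [hc] at Ey Ez; linear_combination Ey - Ez
      exact mul_left_cancel₀ hb this
  · -- c ≠ 0 : then a ≠ 0
    have ha : v 0 ≠ 0 := by
      intro ha
      have hxE : x ^ (2 * h + 1) * (v 1 + v 2 * x) = 0 := by
        rw [ha] at Ex; linear_combination Ex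
      have hyE : y ^ (2 * h + 1) * (v 1 + v 2 * y) = 0 := by
        rw [ha] at Ey; linear_combination Ey
      have hx1 : v 1 + v 2 * x = 0 :=
        (mul_eq_zero.mp hxE).resolve_left (pow_ne_zero _ hx0)
      have hy1 : v 1 + v 2 * y = 0 :=
        (mul_eq_zero.mp hyE).resolve_left (pow_ne_zero _ hy0)
      have : v 2 * (x - y) = 0 := by linear_combination hx1 - hy1
      rcases mul_eq_zero.mp this with h' | h'
      · exact hc h'
      · exact hxy (by linear_combination h')
    -- quadratic relation satisfied by x, y, z
    have Q : ∀ u : F, (v 0 + v 1 * u ^ (2 * h + 1) + v 2 * u ^ (2 * h + 2) = 0) →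
        (v 0 ^ p ^ n * u ^ (2 * h + 2) + v 1 ^ p ^ n * u + v 2 ^ p ^ n = 0) →
        (v 1 + v 2 * u) * (v 1 ^ p ^ n * u + v 2 ^ p ^ n) - v 0 * v 0 ^ p ^ n * u = 0 := by
      intro u hE hS
      linear_combination (v 1 + v 2 * u) * hS - (v 0 ^ p ^ n * u) * hE
    have Qx := Q x Ex Sx
    have Qy := Q y Ey Sy
    have Qz := Q z Ez Sz
    -- differences give linear relations; eliminating gives v1^q * v2 = 0
    have Dxy : (x - y) * (v 2 * v 1 ^ p ^ n * (x + y) +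
        (v 1 * v 1 ^ p ^ n + v 2 * v 2 ^ p ^ n - v 0 * v 0 ^ p ^ n)) = 0 := by
      linear_combination Qx - Qy
    have Dxz : (x - z) * (v 2 * v 1 ^ p ^ n * (x + z) +
        (v 1 * v 1 ^ p ^ n + v 2 * v 2 ^ p ^ n - v 0 * v 0 ^ p ^ n)) = 0 := by
      linear_combination Qx - Qz
    have hxy' : x - y ≠ 0 := sub_ne_zero.mpr hxy
    have hxz' : x - z ≠ 0 := sub_ne_zero.mpr hxz
    have Lxy := (mul_eq_zero.mp Dxy).resolve_left hxy'
    have Lxz := (mul_eq_zero.mp Dxz).resolve_left hxz'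
    have hb2 : v 2 * v 1 ^ p ^ n * (y - z) = 0 := by linear_combination Lxy - Lxz
    have hyz' : y - z ≠ 0 := sub_ne_zero.mpr hyz
    have hb1 : v 1 ^ p ^ n = 0 := by
      rcases mul_eq_zero.mp hb2 with h' | h'
      · rcases mul_eq_zero.mp h' with h'' | h''
        · exact absurd h'' hc
        · exact h''
      · exact absurd h' hyz'
    have hb : v 1 = 0 := pow_eq_zero_iff (pow_ne_zero n hp.ne_zero) |>.mp hb1
    right
    constructor
    · have : v 2 * x ^ (2 * h + 2) = v 2 * y ^ (2 * h + 2) := by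
        rw [hb] at Ex Ey; linear_combination Ex - Ey
      exact mul_left_cancel₀ hc this
    · have : v 2 * y ^ (2 * h + 2) = v 2 * z ^ (2 * h + 2) := by
        rw [hb] at Ey Ez; linear_combination Ey - Ez
      exact mul_left_cancel₀ hc this
end
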